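/- Let q = (q_0, ..., q_5) ∈ ℤ^6 satisfy the Bazaikin freeness condition. Then, up to reordering the entries and replacing q by −q, the reduction of q modulo 3 equals (1,1,1,1,1,1), (1,1,1,0,0,0), or (1,1,1,1,2,0). -/
import Mathlib

/-- The `k`-th elementary symmetric polynomial of the tuple `q`. -/
def esymm {n : ℕ} (k : ℕ) (q : Fin n → ℤ) : ℤ :=
  ∑ t ∈ Finset.univ.powersetCard k, ∏ i ∈ t, q i

/-- The Bazaikin freeness condition: the entries sum to zero, all entries are odd,
and `gcd (q a + q b, q c + q d) = 2` for all pairwise distinct indices `a b c d`. -/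
def BazaikinFree (q : Fin 6 → ℤ) : Prop :=
  (∑ i, q i) = 0 ∧ (∀ i, Odd (q i)) ∧
    ∀ a b c d : Fin 6, a ≠ b → a ≠ c → a ≠ d → b ≠ c → b ≠ d → c ≠ d →
      Int.gcd (q a + q b) (q c + q d) = 2

/-- The positive curvature condition: there is an index `i₀` such that
`q i + q j > 0` for all pairs `i < j` avoiding `i₀`, or `q i + q j < 0` for all such pairs. -/
def PosCurv (q : Fin 6 → ℤ) : Prop :=
  ∃ i₀ : Fin 6,
    (∀ i j : Fin 6, i < j → i ≠ i₀ → j ≠ i₀ → 0 < q i + q j) ∨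
    (∀ i j : Fin 6, i < j → i ≠ i₀ → j ≠ i₀ → q i + q j < 0)

set_option synthInstance.maxSize 2000
set_option synthInstance.maxHeartbeats 2000000
set_option maxRecDepth 20000

set_option maxHeartbeats 4000000 in
private theorem baz_core : ∀ a0 a1 a2 a3 a4 a5 : ZMod 3,
    (a0+a1+a2+a3+a4+a5 = 0) →
    (¬(a0+a1 = 0 ∧ a2+a3 = 0) ∧
      ¬(a0+a1 = 0 ∧ a2+a4 = 0) ∧
      ¬(a0+a1 = 0 ∧ a2+a5 = 0) ∧
      ¬(a0+a1 = 0 ∧ a3+a4 = 0) ∧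
      ¬(a0+a1 = 0 ∧ a3+a5 = 0) ∧
      ¬(a0+a1 = 0 ∧ a4+a5 = 0) ∧
      ¬(a0+a2 = 0 ∧ a1+a3 = 0) ∧
      ¬(a0+a2 = 0 ∧ a1+a4 = 0) ∧
      ¬(a0+a2 = 0 ∧ a1+a5 = 0) ∧
      ¬(a0+a2 = 0 ∧ a3+a4 = 0) ∧
      ¬(a0+a2 = 0 ∧ a3+a5 = 0) ∧
      ¬(a0+a2 = 0 ∧ a4+a5 = 0) ∧
      ¬(a0+a3 = 0 ∧ a1+a2 = 0) ∧
      ¬(a0+a3 = 0 ∧ a1+a4 = 0) ∧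
      ¬(a0+a3 = 0 ∧ a1+a5 = 0) ∧
      ¬(a0+a3 = 0 ∧ a2+a4 = 0) ∧
      ¬(a0+a3 = 0 ∧ a2+a5 = 0) ∧
      ¬(a0+a3 = 0 ∧ a4+a5 = 0) ∧
      ¬(a0+a4 = 0 ∧ a1+a2 = 0) ∧
      ¬(a0+a4 = 0 ∧ a1+a3 = 0) ∧
      ¬(a0+a4 = 0 ∧ a1+a5 = 0) ∧
      ¬(a0+a4 = 0 ∧ a2+a3 = 0) ∧
      ¬(a0+a4 = 0 ∧ a2+a5 = 0) ∧
      ¬(a0+a4 = 0 ∧ a3+a5 = 0) ∧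
      ¬(a0+a5 = 0 ∧ a1+a2 = 0) ∧
      ¬(a0+a5 = 0 ∧ a1+a3 = 0) ∧
      ¬(a0+a5 = 0 ∧ a1+a4 = 0) ∧
      ¬(a0+a5 = 0 ∧ a2+a3 = 0) ∧
      ¬(a0+a5 = 0 ∧ a2+a4 = 0) ∧
      ¬(a0+a5 = 0 ∧ a3+a4 = 0) ∧
      ¬(a1+a2 = 0 ∧ a3+a4 = 0) ∧
      ¬(a1+a2 = 0 ∧ a3+a5 = 0) ∧
      ¬(a1+a2 = 0 ∧ a4+a5 = 0) ∧
      ¬(a1+a3 = 0 ∧ a2+a4 = 0) ∧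
      ¬(a1+a3 = 0 ∧ a2+a5 = 0) ∧
      ¬(a1+a3 = 0 ∧ a4+a5 = 0) ∧
      ¬(a1+a4 = 0 ∧ a2+a3 = 0) ∧
      ¬(a1+a4 = 0 ∧ a2+a5 = 0) ∧
      ¬(a1+a4 = 0 ∧ a3+a5 = 0) ∧
      ¬(a1+a5 = 0 ∧ a2+a3 = 0) ∧
      ¬(a1+a5 = 0 ∧ a2+a4 = 0) ∧
      ¬(a1+a5 = 0 ∧ a3+a4 = 0) ∧
      ¬(a2+a3 = 0 ∧ a4+a5 = 0) ∧
      ¬(a2+a4 = 0 ∧ a3+a5 = 0) ∧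
      ¬(a2+a5 = 0 ∧ a3+a4 = 0)) →
    ∃ ε : ZMod 3, (ε = 1 ∨ ε = -1) ∧
      (Multiset.map (fun i => ε * ![a0,a1,a2,a3,a4,a5] i) Finset.univ.val
          = Multiset.map (![1,1,1,1,1,1] : Fin 6 → ZMod 3) Finset.univ.val ∨
       Multiset.map (fun i => ε * ![a0,a1,a2,a3,a4,a5] i) Finset.univ.val
          = Multiset.map (![1,1,1,0,0,0] : Fin 6 → ZMod 3) Finset.univ.val ∨
       Multiset.map (fun i => ε * ![a0,a1,a2,a3,a4,a5] i) Finset.univ.val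
          = Multiset.map (![1,1,1,1,2,0] : Fin 6 → ZMod 3) Finset.univ.val) := by
  decide

private theorem baz_perm {α : Type*} [DecidableEq α] {f g : Fin 6 → α}
    (h : Multiset.map f Finset.univ.val = Multiset.map g Finset.univ.val) :
    ∃ σ : Equiv.Perm (Fin 6), ∀ i, f (σ i) = g i := by
  have hc : ∀ c : α, Fintype.card {i // g i = c} = Fintype.card {i // f i = c} := by
    intro c
    have hh := congrArg (Multiset.count c) h
    simp only [Multiset.count_map] at hh
    simp only [Fintype.card_subtype, Finset.card, Finset.filter_val]
    simp only [eq_comm] at hh ⊢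
    exact hh
  exact ⟨Equiv.ofFiberEquiv (fun c => Fintype.equivOfCardEq (hc c)),
    fun i => Equiv.ofFiberEquiv_map _ i⟩

private theorem baz_bridge (q : Fin 6 → ℤ) (ε : ℤ) (εz : ZMod 3) (hcast : (ε : ZMod 3) = εz)
    (σ : Equiv.Perm (Fin 6)) (pz : Fin 6 → ZMod 3) (pint : Fin 6 → ℤ)
    (hp : ∀ i, ((pint i : ℤ) : ZMod 3) = pz i)
    (hσ : ∀ i, εz * ((q (σ i) : ℤ) : ZMod 3) = pz i) :
    ∀ i, ε * q (σ i) ≡ pint i [ZMOD 3] := by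
  intro i
  have hmain : ((ε * q (σ i) : ℤ) : ZMod 3) = ((pint i : ℤ) : ZMod 3) := by
    push_cast
    rw [hcast, hσ i, hp i]
  exact (ZMod.intCast_eq_intCast_iff _ _ 3).mp hmain

theorem residues_mod_three (q : Fin 6 → ℤ) (h : BazaikinFree q) :
    ∃ (σ : Equiv.Perm (Fin 6)) (ε : ℤ), (ε = 1 ∨ ε = -1) ∧
      ((∀ i : Fin 6, ε * q (σ i) ≡ (![1, 1, 1, 1, 1, 1] : Fin 6 → ℤ) i [ZMOD 3]) ∨
       (∀ i : Fin 6, ε * q (σ i) ≡ (![1, 1, 1, 0, 0, 0] : Fin 6 → ℤ) i [ZMOD 3]) ∨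
       (∀ i : Fin 6, ε * q (σ i) ≡ (![1, 1, 1, 1, 2, 0] : Fin 6 → ℤ) i [ZMOD 3])) := by
  obtain ⟨hsum, -, hgcd⟩ := h
  have f : Fin 6 → ZMod 3 := fun i => ((q i : ℤ) : ZMod 3)
  have hsum3 : ((q 0 : ℤ) : ZMod 3) + q 1 + q 2 + q 3 + q 4 + q 5 = 0 := by
    have h0 : ((∑ i, q i : ℤ) : ZMod 3) = 0 := by rw [hsum]; simp
    rw [Fin.sum_univ_six] at h0
    push_cast at h0
    exact h0
  have key : ∀ a b c d : Fin 6, a ≠ b → a ≠ c → a ≠ d → b ≠ c → b ≠ d → c ≠ d →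
      ¬(((q a : ℤ) : ZMod 3) + ((q b : ℤ) : ZMod 3) = 0 ∧
        ((q c : ℤ) : ZMod 3) + ((q d : ℤ) : ZMod 3) = 0) := by
    rintro a b c d hab hac had hbc hbd hcd ⟨h1, h2⟩
    rw [← Int.cast_add, ZMod.intCast_zmod_eq_zero_iff_dvd] at h1 h2
    have h3 := Int.dvd_gcd h1 h2
    rw [hgcd a b c d hab hac had hbc hbd hcd] at h3
    norm_num at h3
  obtain ⟨εz, hεz, hM⟩ := baz_core ((q 0 : ℤ) : ZMod 3) ((q 1 : ℤ) : ZMod 3)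
    ((q 2 : ℤ) : ZMod 3) ((q 3 : ℤ) : ZMod 3) ((q 4 : ℤ) : ZMod 3) ((q 5 : ℤ) : ZMod 3)
    hsum3
    ⟨key 0 1 2 3 (by decide) (by decide) (by decide) (by decide) (by decide) (by decide),
      key 0 1 2 4 (by decide) (by decide) (by decide) (by decide) (by decide) (by decide),
      key 0 1 2 5 (by decide) (by decide) (by decide) (by decide) (by decide) (by decide),
      key 0 1 3 4 (by decide) (by decide) (by decide) (by decide) (by decide) (by decide),
      key 0 1 3 5 (by decide) (by decide) (by decide) (by decide) (by decide) (by decide),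
      key 0 1 4 5 (by decide) (by decide) (by decide) (by decide) (by decide) (by decide),
      key 0 2 1 3 (by decide) (by decide) (by decide) (by decide) (by decide) (by decide),
      key 0 2 1 4 (by decide) (by decide) (by decide) (by decide) (by decide) (by decide),
      key 0 2 1 5 (by decide) (by decide) (by decide) (by decide) (by decide) (by decide),
      key 0 2 3 4 (by decide) (by decide) (by decide) (by decide) (by decide) (by decide),
      key 0 2 3 5 (by decide) (by decide) (by decide) (by decide) (by decide) (by decide),
      key 0 2 4 5 (by decide) (by decide) (by decide) (by decide) (by decide) (by decide),
      key 0 3 1 2 (by decide) (by decide) (by decide) (by decide) (by decide) (by decide),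
      key 0 3 1 4 (by decide) (by decide) (by decide) (by decide) (by decide) (by decide),
      key 0 3 1 5 (by decide) (by decide) (by decide) (by decide) (by decide) (by decide),
      key 0 3 2 4 (by decide) (by decide) (by decide) (by decide) (by decide) (by decide),
      key 0 3 2 5 (by decide) (by decide) (by decide) (by decide) (by decide) (by decide),
      key 0 3 4 5 (by decide) (by decide) (by decide) (by decide) (by decide) (by decide),
      key 0 4 1 2 (by decide) (by decide) (by decide) (by decide) (by decide) (by decide),
      key 0 4 1 3 (by decide) (by decide) (by decide) (by decide) (by decide) (by decide),
      key 0 4 1 5 (by decide) (by decide) (by decide) (by decide) (by decide) (by decide),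
      key 0 4 2 3 (by decide) (by decide) (by decide) (by decide) (by decide) (by decide),
      key 0 4 2 5 (by decide) (by decide) (by decide) (by decide) (by decide) (by decide),
      key 0 4 3 5 (by decide) (by decide) (by decide) (by decide) (by decide) (by decide),
      key 0 5 1 2 (by decide) (by decide) (by decide) (by decide) (by decide) (by decide),
      key 0 5 1 3 (by decide) (by decide) (by decide) (by decide) (by decide) (by decide),
      key 0 5 1 4 (by decide) (by decide) (by decide) (by decide) (by decide) (by decide),
      key 0 5 2 3 (by decide) (by decide) (by decide) (by decide) (by decide) (by decide),
      key 0 5 2 4 (by decide) (by decide) (by decide) (by decide) (by decide) (by decide),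
      key 0 5 3 4 (by decide) (by decide) (by decide) (by decide) (by decide) (by decide),
      key 1 2 3 4 (by decide) (by decide) (by decide) (by decide) (by decide) (by decide),
      key 1 2 3 5 (by decide) (by decide) (by decide) (by decide) (by decide) (by decide),
      key 1 2 4 5 (by decide) (by decide) (by decide) (by decide) (by decide) (by decide),
      key 1 3 2 4 (by decide) (by decide) (by decide) (by decide) (by decide) (by decide),
      key 1 3 2 5 (by decide) (by decide) (by decide) (by decide) (by decide) (by decide),
      key 1 3 4 5 (by decide) (by decide) (by decide) (by decide) (by decide) (by decide),
      key 1 4 2 3 (by decide) (by decide) (by decide) (by decide) (by decide) (by decide),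
      key 1 4 2 5 (by decide) (by decide) (by decide) (by decide) (by decide) (by decide),
      key 1 4 3 5 (by decide) (by decide) (by decide) (by decide) (by decide) (by decide),
      key 1 5 2 3 (by decide) (by decide) (by decide) (by decide) (by decide) (by decide),
      key 1 5 2 4 (by decide) (by decide) (by decide) (by decide) (by decide) (by decide),
      key 1 5 3 4 (by decide) (by decide) (by decide) (by decide) (by decide) (by decide),
      key 2 3 4 5 (by decide) (by decide) (by decide) (by decide) (by decide) (by decide),
      key 2 4 3 5 (by decide) (by decide) (by decide) (by decide) (by decide) (by decide),
      key 2 5 3 4 (by decide) (by decide) (by decide) (by decide) (by decide) (by decide)⟩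
  have hfe : (![((q 0 : ℤ) : ZMod 3), ((q 1 : ℤ) : ZMod 3), ((q 2 : ℤ) : ZMod 3),
      ((q 3 : ℤ) : ZMod 3), ((q 4 : ℤ) : ZMod 3), ((q 5 : ℤ) : ZMod 3)] : Fin 6 → ZMod 3)
      = fun i => ((q i : ℤ) : ZMod 3) := by
    ext i; fin_cases i <;> rfl
  rw [hfe] at hM
  obtain ⟨ε, hε, hcast⟩ : ∃ ε : ℤ, (ε = 1 ∨ ε = -1) ∧ ((ε : ZMod 3) = εz) := by
    rcases hεz with h' | h'
    · exact ⟨1, Or.inl rfl, by simp [h']⟩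
    · exact ⟨-1, Or.inr rfl, by simp [h']⟩
  rcases hM with hM | hM | hM
  · obtain ⟨σ, hσ⟩ := baz_perm hM
    exact ⟨σ, ε, hε, Or.inl (baz_bridge q ε εz hcast σ _ _ (by intro i; fin_cases i <;> rfl) hσ)⟩
  · obtain ⟨σ, hσ⟩ := baz_perm hM
    exact ⟨σ, ε, hε, Or.inr (Or.inl
      (baz_bridge q ε εz hcast σ _ _ (by intro i; fin_cases i <;> rfl) hσ))⟩
  · obtain ⟨σ, hσ⟩ := baz_perm hM
    exact ⟨σ, ε, hε, Or.inr (Or.inr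
      (baz_bridge q ε εz hcast σ _ _ (by intro i; fin_cases i <;> rfl) hσ))⟩
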